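/- Non-uniqueness limit example: Let μ = ν be Lebesgue measure on [0,1], and define cost functions h_t on [0,1]² by h_t(x,y) = min(|x−y|, |x+y−1| + t) for t ≥ 0 and h_t(x,y) = min(|x−y| − t, |x+y−1|) for t < 0. Then for every t > 0 the unique optimal plan for (μ,ν,h_t) is the pushforward of Lebesgue measure under x ↦ (x,x) (concentrated on the diagonal y = x), and for every t < 0 the unique optimal plan is the pushforward under x ↦ (x, 1−x) (concentrated on the antidiagonal x + y = 1). -/

import Mathlib

open MeasureTheory
open scoped ENNReal

def IsCoupling {A B : Type*} [MeasurableSpace A] [MeasurableSpace B]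
    (σ : Measure (A × B)) (μ : Measure A) (ν : Measure B) : Prop :=
  σ.map Prod.fst = μ ∧ σ.map Prod.snd = ν

noncomputable def Kcost {A B : Type*} [MeasurableSpace A] [MeasurableSpace B]
    (h : A → B → ℝ) (μ : Measure A) (ν : Measure B) : ℝ≥0∞ :=
  ⨅ σ ∈ {σ : Measure (A × B) | IsCoupling σ μ ν},
    ∫⁻ p, ENNReal.ofReal (h p.1 p.2) ∂σ

def IsOptimalPlan {X Y : Type*} [MeasurableSpace X] [MeasurableSpace Y]
    (σ : Measure (X × Y)) (μ : Measure X) (ν : Measure Y) (h : X × Y → ℝ) : Prop :=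
  IsCoupling σ μ ν ∧ (∫⁻ p, ENNReal.ofReal (h p) ∂σ) = Kcost (fun x y => h (x, y)) μ ν

/-- The parametric family of cost functions on `[0,1]²`. -/
noncomputable def hParam (t : ℝ) (p : ℝ × ℝ) : ℝ :=
  if 0 ≤ t then min |p.1 - p.2| (|p.1 + p.2 - 1| + t)
  else min (|p.1 - p.2| - t) |p.1 + p.2 - 1|

lemma key_lemma (μ : Measure ℝ) (h : ℝ × ℝ → ℝ) (hm : Measurable h)
    (g : ℝ → ℝ) (hg : Measurable g) (hmap : μ.map g = μ)
    (hz : ∀ x, h (x, g x) = 0)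
    (hle : ∀ p : ℝ × ℝ, h p ≤ 0 → p = (p.1, g p.1)) :
    IsOptimalPlan (μ.map fun x => (x, g x)) μ μ h ∧
    ∀ σ : Measure (ℝ × ℝ), IsOptimalPlan σ μ μ h → σ = μ.map fun x => (x, g x) := by
  have hem : Measurable fun x : ℝ => (x, g x) := measurable_id.prodMk hg
  have hcoup : IsCoupling (μ.map fun x => (x, g x)) μ μ := by
    constructor
    · have h1 : (Prod.fst ∘ fun x : ℝ => (x, g x)) = id := rfl
      rw [Measure.map_map measurable_fst hem, h1, Measure.map_id]
    · have h1 : (Prod.snd ∘ fun x : ℝ => (x, g x)) = g := rfl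
      rw [Measure.map_map measurable_snd hem, h1, hmap]
  have hmo : Measurable fun p : ℝ × ℝ => ENNReal.ofReal (h p) :=
    ENNReal.measurable_ofReal.comp hm
  have hint : (∫⁻ p, ENNReal.ofReal (h p) ∂(μ.map fun x => (x, g x))) = 0 := by
    rw [lintegral_map hmo hem]
    simp [hz]
  have hK : Kcost (fun x y => h (x, y)) μ μ = 0 := by
    refine le_antisymm ?_ zero_le
    refine le_trans (iInf₂_le (μ.map fun x => (x, g x)) hcoup) ?_
    exact le_of_eq hint
  refine ⟨⟨hcoup, by rw [hint, hK]⟩, ?_⟩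
  rintro σ ⟨hσc, hσi⟩
  rw [hK] at hσi
  have hae : ∀ᵐ p ∂σ, ENNReal.ofReal (h p) = 0 :=
    (lintegral_eq_zero_iff hmo).1 hσi
  have hae2 : (fun p : ℝ × ℝ => (p.1, g p.1)) =ᵐ[σ] id := by
    filter_upwards [hae] with p hp
    exact (hle p (ENNReal.ofReal_eq_zero.1 hp)).symm
  calc σ = σ.map id := Measure.map_id.symm
    _ = σ.map (fun p : ℝ × ℝ => (p.1, g p.1)) := (Measure.map_congr hae2).symm
    _ = (σ.map Prod.fst).map (fun x => (x, g x)) :=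
        (Measure.map_map hem measurable_fst).symm
    _ = μ.map fun x => (x, g x) := by rw [hσc.1]

theorem stmt18 :
    let μ : Measure ℝ := volume.restrict (Set.Icc 0 1)
    (∀ t : ℝ, 0 < t →
      IsOptimalPlan (μ.map fun x => (x, x)) μ μ (hParam t) ∧
      ∀ σ : Measure (ℝ × ℝ), IsOptimalPlan σ μ μ (hParam t) →
        σ = μ.map fun x => (x, x)) ∧
    (∀ t : ℝ, t < 0 →
      IsOptimalPlan (μ.map fun x => (x, 1 - x)) μ μ (hParam t) ∧
      ∀ σ : Measure (ℝ × ℝ), IsOptimalPlan σ μ μ (hParam t) →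
        σ = μ.map fun x => (x, 1 - x)) := by
  intro μ
  constructor
  · intro t ht
    have hm : Measurable (hParam t) := by
      unfold hParam
      split_ifs
      · exact (Continuous.min (by continuity) (by continuity)).measurable
      · exact (Continuous.min (by continuity) (by continuity)).measurable
    have := key_lemma μ (hParam t) hm id measurable_id (Measure.map_id)
      (fun x => by
        simp only [hParam, if_pos ht.le, id]
        rw [sub_self, abs_zero]
        exact min_eq_left (by positivity))
      (fun p hp => by
        simp only [hParam, if_pos ht.le] at hp
        have h2 : 0 < |p.1 + p.2 - 1| + t := by positivity
        have : |p.1 - p.2| ≤ 0 := by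
          rcases min_le_iff.1 (le_of_lt (lt_of_le_of_lt hp h2)) with h | h
          · rcases le_or_gt (|p.1 - p.2|) 0 with h' | h'
            · exact h'
            · rcases min_le_iff.1 hp with h'' | h''
              · exact h''
              · exact absurd h'' (not_le.2 (by positivity))
          · rcases min_le_iff.1 hp with h'' | h''
            · exact h''
            · exact absurd h'' (not_le.2 (by positivity))
        have : p.1 = p.2 := by
          have := abs_nonpos_iff.1 this
          linarith [sub_eq_zero.1 this]
        ext <;> simp [this])
    simpa using this
  · intro t ht
    have hm : Measurable (hParam t) := by
      unfold hParam
      split_ifs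
      · exact (Continuous.min (by continuity) (by continuity)).measurable
      · exact (Continuous.min (by continuity) (by continuity)).measurable
    have hpre : (fun x : ℝ => 1 - x) ⁻¹' (Set.Icc 0 1) = Set.Icc 0 1 := by
      ext x
      simp only [Set.mem_preimage, Set.mem_Icc]
      constructor <;> intro ⟨h1, h2⟩ <;> constructor <;> linarith
    have hmp : MeasurePreserving (fun x : ℝ => 1 - x) volume volume := by
      have : (fun x : ℝ => 1 - x) = (fun y : ℝ => y + 1) ∘ (fun x : ℝ => -x) := by
        funext x; simp [sub_eq_neg_add]
      rw [this]
      exact (measurePreserving_add_right volume 1).comp (Measure.measurePreserving_neg volume)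
    have hmap : μ.map (fun x => 1 - x) = μ := by
      have := (hmp.restrict_preimage (measurableSet_Icc : MeasurableSet (Set.Icc (0:ℝ) 1))).map_eq
      rwa [hpre] at this
    have := key_lemma μ (hParam t) hm (fun x => 1 - x) (measurable_const.sub measurable_id) hmap
      (fun x => by
        simp only [hParam, if_neg (not_le.2 ht)]
        have h1 : x + (1 - x) - 1 = 0 := by ring
        rw [h1, abs_zero]
        exact min_eq_right (by have := abs_nonneg (x - (1 - x)); linarith))
      (fun p hp => by
        simp only [hParam, if_neg (not_le.2 ht)] at hp
        have h2 : 0 < |p.1 - p.2| - t := by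
          have := abs_nonneg (p.1 - p.2); linarith
        have h3 : |p.1 + p.2 - 1| ≤ 0 := by
          rcases min_le_iff.1 hp with h | h
          · exact absurd h (not_le.2 h2)
          · exact h
        have : p.2 = 1 - p.1 := by
          have := abs_nonpos_iff.1 h3; linarith
        ext <;> simp [this])
    simpa using this
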